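/- With Ẽ as above, Tr(ρ Ẽ(x₀ ⊗ Ẽ(x₁ ⊗ I))) = ∑_{i₀,i₁} Tr(B_{i₀}^{i₁} ρ_{i₀} (B_{i₀}^{i₁})*) φ_{i₀}(x₀) φ_{i₁}(x₁), where φ_k(x) = Tr((ρ_k ⊗ |k⟩⟨k|)x)/Tr(ρ_k) and ρ = ∑_j ρ_j ⊗ |j⟩⟨j|. -/

import Mathlib

open Matrix Kronecker BigOperators ComplexOrder

/-- The dual transition expectation
`Ẽ(x ⊗ y) = ∑_{i,j} φ_j(x) • (M_j^i)* y M_j^i`, `φ_j(x) = Tr((ρ_j ⊗ |j⟩⟨j|) x)/Tr ρ_j`. -/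
noncomputable def dualTransExp {n Λ : Type*} [Fintype n] [Fintype Λ] [DecidableEq n] [DecidableEq Λ]
    (B : Λ → Λ → Matrix n n ℂ) (ρf : Λ → Matrix n n ℂ)
    (x y : Matrix (n × Λ) (n × Λ) ℂ) : Matrix (n × Λ) (n × Λ) ℂ :=
  ∑ i, ∑ j,
    (((ρf j ⊗ₖ Matrix.single j j (1 : ℂ)) * x).trace / (ρf j).trace) •
      (((B i j) ⊗ₖ Matrix.single i j (1 : ℂ))ᴴ * y *
        ((B i j) ⊗ₖ Matrix.single i j (1 : ℂ)))

section helpers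
set_option linter.unusedSectionVars false
variable {n Λ : Type*} [Fintype n] [Fintype Λ] [DecidableEq n] [DecidableEq Λ]

lemma kron_conjT (A : Matrix n n ℂ) (C : Matrix Λ Λ ℂ) : (A ⊗ₖ C)ᴴ = Aᴴ ⊗ₖ Cᴴ := by
  ext ⟨a,b⟩ ⟨c,d⟩
  simp [conjTranspose_apply, kroneckerMap_apply]

lemma stdB_conjT (i j : Λ) : (Matrix.single i j (1:ℂ))ᴴ = Matrix.single j i 1 := by
  ext a b
  simp [conjTranspose_apply, Matrix.single, Matrix.of_apply, and_comm, apply_ite (star : ℂ → ℂ)]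

lemma stdB_trace (k : Λ) : (Matrix.single k k (1:ℂ)).trace = 1 := by
  simp [Matrix.trace, Matrix.diag, Matrix.single, Finset.sum_ite_eq]

lemma sum_kron {ι : Type*} (s : Finset ι) (A : ι → Matrix n n ℂ) (C : Matrix Λ Λ ℂ) :
    (∑ i ∈ s, A i) ⊗ₖ C = ∑ i ∈ s, A i ⊗ₖ C := by
  ext ⟨a,b⟩ ⟨c,d⟩
  simp [kroneckerMap_apply, Matrix.sum_apply, Finset.sum_mul]

end helpers

/-- `Tr(ρ Ẽ(x₀ ⊗ Ẽ(x₁ ⊗ 1))) = ∑_{i₀,i₁} Tr(B_{i₀}^{i₁} ρ_{i₀} (B_{i₀}^{i₁})*)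
φ_{i₀}(x₀) φ_{i₁}(x₁)` for `ρ = ∑ j, ρ_j ⊗ |j⟩⟨j|`. -/
theorem dual_qmc_two_point_function
    {n Λ : Type*} [Fintype n] [Fintype Λ] [DecidableEq n] [DecidableEq Λ]
    (B : Λ → Λ → Matrix n n ℂ)
    (hB : ∀ j, ∑ i, (B i j)ᴴ * B i j = 1)
    (ρf : Λ → Matrix n n ℂ)
    (hpos : ∀ j, (ρf j).PosSemidef)
    (htr : ∀ j, 0 < (ρf j).trace)
    (ρ : Matrix (n × Λ) (n × Λ) ℂ)
    (hρ : ρ = ∑ j, (ρf j) ⊗ₖ (Matrix.single j j (1 : ℂ)))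
    (φ : Λ → Matrix (n × Λ) (n × Λ) ℂ → ℂ)
    (hφ : ∀ k x, φ k x = ((ρf k ⊗ₖ Matrix.single k k (1 : ℂ)) * x).trace / (ρf k).trace)
    (x₀ x₁ : Matrix (n × Λ) (n × Λ) ℂ) :
    (ρ * dualTransExp B ρf x₀ (dualTransExp B ρf x₁ 1)).trace
      = ∑ i₀, ∑ i₁, (B i₁ i₀ * ρf i₀ * (B i₁ i₀)ᴴ).trace * φ i₀ x₀ * φ i₁ x₁ := by
  -- Step 1: inner expectation
  have h1 : dualTransExp B ρf x₁ 1
      = ∑ k, φ k x₁ • ((1 : Matrix n n ℂ) ⊗ₖ Matrix.single k k (1:ℂ)) := by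
    rw [dualTransExp, Finset.sum_comm]
    refine Finset.sum_congr rfl fun j _ => ?_
    rw [← Finset.smul_sum, hφ]
    congr 1
    calc ∑ i, ((B i j) ⊗ₖ Matrix.single i j (1:ℂ))ᴴ * 1 *
            ((B i j) ⊗ₖ Matrix.single i j (1:ℂ))
        = ∑ i, ((B i j)ᴴ * B i j) ⊗ₖ Matrix.single j j (1:ℂ) := by
          refine Finset.sum_congr rfl fun i _ => ?_
          rw [mul_one, kron_conjT, stdB_conjT, ← Matrix.mul_kronecker_mul,
            Matrix.single_mul_single_same, one_mul]
      _ = (∑ i, (B i j)ᴴ * B i j) ⊗ₖ Matrix.single j j (1:ℂ) :=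
          (sum_kron _ _ _).symm
      _ = (1 : Matrix n n ℂ) ⊗ₖ Matrix.single j j (1:ℂ) := by rw [hB]
  -- Step 2: outer expectation
  have h2 : dualTransExp B ρf x₀ (dualTransExp B ρf x₁ 1)
      = ∑ i, ∑ j, (φ j x₀ * φ i x₁) •
          (((B i j)ᴴ * B i j) ⊗ₖ Matrix.single j j (1:ℂ)) := by
    rw [h1, dualTransExp]
    refine Finset.sum_congr rfl fun i _ => Finset.sum_congr rfl fun j _ => ?_
    rw [hφ, ← smul_smul]
    congr 1
    -- middle term : ∑ k, φ k x₁ • (1 ⊗ E_kk)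
    have key : ∀ k : Λ,
        ((B i j) ⊗ₖ Matrix.single i j (1:ℂ))ᴴ *
          (φ k x₁ • ((1 : Matrix n n ℂ) ⊗ₖ Matrix.single k k (1:ℂ))) *
          ((B i j) ⊗ₖ Matrix.single i j (1:ℂ))
        = if k = i then φ i x₁ • (((B i j)ᴴ * B i j) ⊗ₖ Matrix.single j j (1:ℂ))
          else 0 := by
      intro k
      rw [Matrix.mul_smul, Matrix.smul_mul, kron_conjT, stdB_conjT, ← Matrix.mul_kronecker_mul,
        ← Matrix.mul_kronecker_mul]
      by_cases hk : k = i
      · subst hk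
        rw [if_pos rfl, Matrix.single_mul_single_same, Matrix.single_mul_single_same]
        simp
      · rw [if_neg hk, Matrix.single_mul_single_of_ne (h := Ne.symm hk)]
        simp
    rw [Finset.mul_sum, Finset.sum_mul]
    calc ∑ k, ((B i j) ⊗ₖ Matrix.single i j (1:ℂ))ᴴ *
            (φ k x₁ • ((1 : Matrix n n ℂ) ⊗ₖ Matrix.single k k (1:ℂ))) *
            ((B i j) ⊗ₖ Matrix.single i j (1:ℂ))
        = ∑ k, if k = i then φ i x₁ • (((B i j)ᴴ * B i j) ⊗ₖ Matrix.single j j (1:ℂ))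
            else 0 := Finset.sum_congr rfl fun k _ => key k
      _ = φ i x₁ • (((B i j)ᴴ * B i j) ⊗ₖ Matrix.single j j (1:ℂ)) := by
          rw [Finset.sum_ite_eq']; simp
  -- Step 3: take the trace
  have key : ∀ m i j : Λ,
      ((ρf m ⊗ₖ Matrix.single m m (1:ℂ)) *
        (((B i j)ᴴ * B i j) ⊗ₖ Matrix.single j j (1:ℂ))).trace
      = if j = m then (B i j * ρf j * (B i j)ᴴ).trace else 0 := by
    intro m i j
    rw [← Matrix.mul_kronecker_mul]
    by_cases hm : j = m
    · subst hm
      rw [if_pos rfl, Matrix.single_mul_single_same, one_mul, trace_kronecker, stdB_trace,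
        mul_one, ← mul_assoc, Matrix.trace_mul_cycle]
    · rw [if_neg hm, Matrix.single_mul_single_of_ne (h := Ne.symm hm)]
      simp [trace_kronecker]
  rw [hρ, h2]
  simp only [Finset.mul_sum, Finset.sum_mul, Matrix.mul_smul, Matrix.trace_sum,
    Matrix.trace_smul, smul_eq_mul, key, mul_ite, mul_zero, Finset.sum_ite_eq',
    Finset.sum_ite_eq, Finset.mem_univ, if_true]
  rw [Finset.sum_comm]
  refine Finset.sum_congr rfl fun i₀ _ => Finset.sum_congr rfl fun i₁ _ => ?_
  ring
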